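/- For every positive integer ℓ, the quantity Σ_{k=1}^{ℓ} c(ℓ,k)/(4^k · ℓ!) = Γ(ℓ + 1/4)/(Γ(ℓ+1) Γ(1/4)) satisfies 1/(4(ℓ+1)^{3/4}) < Γ(ℓ + 1/4)/(Γ(ℓ+1) Γ(1/4)) < 3/(5(ℓ+1)^{3/4}). -/

import Mathlib

/-- Number of cycles of a permutation, counting fixed points as cycles of length 1. -/
def numCycles {n : ℕ} (σ : Equiv.Perm (Fin n)) : ℕ :=
  Multiset.card σ.cycleType + (n - σ.cycleType.sum)

/-- The unsigned Stirling number of the first kind: the number of permutations of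
`ℓ` letters with exactly `k` cycles. -/
noncomputable def stirlingC (ℓ k : ℕ) : ℕ :=
  Nat.card {σ : Equiv.Perm (Fin ℓ) // numCycles σ = k}

/-- The signed Stirling number of the first kind. -/
noncomputable def stirlingS (ℓ k : ℕ) : ℤ :=
  (-1) ^ (ℓ - k) * stirlingC ℓ k


open Equiv Equiv.Perm Finset

variable {β : Type*} [Fintype β] [DecidableEq β]

/-- general cycle count (fixed points count as cycles) -/
def pcyc (f : Perm β) : ℕ :=
  Multiset.card f.cycleType + (Fintype.card β - f.support.card)

lemma insert_cycle {c : Perm β} (hc : c.IsCycle) {a b : β} (ha : c a = a)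
    (hb : b ∈ c.support) :
    (Equiv.swap a b * c).IsCycle ∧ (Equiv.swap a b * c).support = insert a c.support := by
  have hanotin : a ∉ c.support := by simp [ha]
  have hab : a ≠ b := fun h => hanotin (h ▸ hb)
  set g := Equiv.swap a b * c with hg
  have hga : g a = b := by simp [hg, ha]
  have hsupp : g.support = insert a c.support := by
    ext x
    rcases eq_or_ne x a with rfl | hxa
    · simp [mem_support, hga, hab.symm]
    · simp only [mem_insert, hxa, false_or]
      constructor
      · intro hx
        by_contra hxc
        have hcx : c x = x := by simpa [mem_support] using hxc
        have hxb : x ≠ b := fun h => hxc (h ▸ hb)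
        simp [hg, mem_support, hcx, Equiv.swap_apply_of_ne_of_ne hxa hxb] at hx
      · intro hxc
        simp only [mem_support, hg, Perm.mul_apply]
        intro hcon
        have hcxa : c x ≠ a := fun h =>
          hanotin (h ▸ Equiv.Perm.apply_mem_support.mpr hxc)
        rcases eq_or_ne (c x) b with h2 | h2
        · rw [h2, Equiv.swap_apply_right] at hcon; exact hxa hcon.symm
        · rw [Equiv.swap_apply_of_ne_of_ne hcxa h2] at hcon
          exact (mem_support.mp hxc) hcon
  refine ⟨⟨a, by rw [hga]; exact hab.symm, ?_⟩, hsupp⟩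
  intro y hy
  have hyg : y ∈ g.support := mem_support.mpr hy
  rw [hsupp, mem_insert] at hyg
  have key : ∀ i : ℕ, g.SameCycle a ((c ^ i) b) := by
    intro i
    induction i with
    | zero => exact ⟨1, by simpa using hga⟩
    | succ i ih =>
      set y₀ := (c ^ i) b with hy₀
      have hy₀c : y₀ ∈ c.support := Equiv.Perm.pow_apply_mem_support.mpr hb
      have hstep : (c ^ (i + 1)) b = c y₀ := by
        rw [hy₀, ← Perm.mul_apply, ← pow_succ']
      rcases eq_or_ne (c y₀) b with hcb | hcb
      · rw [hstep, hcb]; exact ⟨1, by simpa using hga⟩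
      · have hcya : c y₀ ≠ a := fun h =>
          hanotin (h ▸ Equiv.Perm.apply_mem_support.mpr hy₀c)
        have hgy : g y₀ = c y₀ := by
          simp [hg, Equiv.swap_apply_of_ne_of_ne hcya hcb]
        rw [hstep, ← hgy]
        exact Equiv.Perm.sameCycle_apply_right.mpr ih
  rcases hyg with rfl | hyc
  · exact Equiv.Perm.SameCycle.refl _ _
  · obtain ⟨i, hi⟩ := hc.exists_pow_eq (mem_support.mp hb) (mem_support.mp hyc)
    exact hi ▸ key i

lemma pcyc_swap_mul (f : Perm β) {a b : β} (ha : f a = a) (hb : b ≠ a) :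
    pcyc (Equiv.swap a b * f) + 1 = pcyc f := by
  classical
  have hanotin : a ∉ f.support := by simp [ha]
  have hsle : f.support.card + 1 ≤ Fintype.card β := by
    have : insert a f.support ⊆ Finset.univ := Finset.subset_univ _
    calc f.support.card + 1 = (insert a f.support).card := by
          rw [Finset.card_insert_of_notMem hanotin]
      _ ≤ Fintype.card β := Finset.card_le_univ _
  rcases eq_or_ne (f b) b with hfb | hfb
  · -- b is a fixed point : new 2-cycle, disjoint
    have hd : Equiv.Perm.Disjoint (Equiv.swap a b) f := by
      intro x
      rcases eq_or_ne x a with rfl | hxa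
      · exact Or.inr ha
      rcases eq_or_ne x b with rfl | hxb
      · exact Or.inr hfb
      · exact Or.inl (Equiv.swap_apply_of_ne_of_ne hxa hxb)
    have hct : (Equiv.swap a b * f).cycleType = (Equiv.swap a b).cycleType + f.cycleType :=
      hd.cycleType_mul
    have hswapct : (Equiv.swap a b).cycleType = {2} := by
      rw [(isCycle_swap hb.symm).cycleType, card_support_swap hb.symm]
    have hsup : (Equiv.swap a b * f).support = (Equiv.swap a b).support ∪ f.support :=
      hd.support_mul
    have hcard : (Equiv.swap a b * f).support.card = 2 + f.support.card := by
      rw [hsup, Finset.card_union_of_disjoint hd.disjoint_support,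
        card_support_swap hb.symm]
    have hsle2 : f.support.card + 2 ≤ Fintype.card β := by
      have hbnotin : b ∉ f.support := by simp [hfb]
      have : insert a (insert b f.support) ⊆ Finset.univ := Finset.subset_univ _
      calc f.support.card + 2 = (insert a (insert b f.support)).card := by
            rw [Finset.card_insert_of_notMem (by simp [hanotin, hb.symm]),
              Finset.card_insert_of_notMem hbnotin]
        _ ≤ Fintype.card β := Finset.card_le_univ _
    simp only [pcyc, hct, hswapct, hcard]
    simp only [Multiset.card_add, Multiset.card_singleton]
    omega
  · -- b is moved: insert a into the cycle of b
    set c := f.cycleOf b with hc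
    have hcc : c.IsCycle := f.isCycle_cycleOf hfb
    have hbc : b ∈ c.support := by
      rw [Equiv.Perm.mem_support_cycleOf_iff]
      exact ⟨Equiv.Perm.SameCycle.refl _ _, mem_support.mpr hfb⟩
    have hsubc : c.support ⊆ f.support := f.support_cycleOf_le b
    have hca : c a = a := by
      rw [hc, Equiv.Perm.cycleOf_apply]
      split_ifs with h
      · exact ha
      · rfl
    set d := f * c⁻¹ with hd
    have hagree : ∀ x, x ∈ c.support → c x = f x := by
      intro x hx
      rw [hc, Equiv.Perm.cycleOf_apply, if_pos]
      exact (Equiv.Perm.mem_support_cycleOf_iff.mp hx).1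
    have hdx_mem : ∀ x, x ∈ c.support → d x = x := by
      intro x hx
      have hcinv : c⁻¹ x ∈ c.support := by
        have := Equiv.Perm.apply_mem_support (f := c⁻¹) (x := x)
        rw [Equiv.Perm.support_inv] at this
        exact this.mpr hx
      have : c (c⁻¹ x) = f (c⁻¹ x) := hagree _ hcinv
      rw [show c (c⁻¹ x) = x by simp] at this
      simp only [hd, Perm.mul_apply]
      exact this.symm
    have hdx_not : ∀ x, x ∉ c.support → d x = f x := by
      intro x hx
      have : c⁻¹ x = x := by
        rw [← Equiv.Perm.notMem_support, Equiv.Perm.support_inv]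
        exact hx
      simp only [hd, Perm.mul_apply, this]
    have hdisj_cd : Equiv.Perm.Disjoint c d := by
      intro x
      by_cases hx : x ∈ c.support
      · exact Or.inr (hdx_mem x hx)
      · exact Or.inl (by rwa [← Equiv.Perm.notMem_support])
    have hfcd : f = c * d := by
      have h1 : d * c = f := by
        rw [hd, inv_mul_cancel_right]
      rw [← h1, hdisj_cd.commute.eq]
    have hda : d a = a := by
      rw [hdx_not a (fun h => hanotin (hsubc h)), ha]
    have hsuppd : d.support = f.support \ c.support := by
      ext x
      by_cases hx : x ∈ c.support
      · simp [mem_support, hdx_mem x hx, hx, hsubc hx]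
      · simp [mem_support, hdx_not x hx, hx]
    obtain ⟨hc'cyc, hc'supp⟩ := insert_cycle hcc hca hbc
    set c' := Equiv.swap a b * c with hc'
    have hanotinc : a ∉ c.support := fun h => hanotin (hsubc h)
    have hgeq : Equiv.swap a b * f = c' * d := by
      rw [hfcd, hc', mul_assoc]
    have hdisj' : Equiv.Perm.Disjoint c' d := by
      intro x
      by_cases hx : x ∈ c'.support
      · rw [hc'supp, mem_insert] at hx
        rcases hx with rfl | hx
        · exact Or.inr hda
        · exact Or.inr (hdx_mem x hx)
      · exact Or.inl (by rwa [← Equiv.Perm.notMem_support])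
    have hctg : (Equiv.swap a b * f).cycleType = c'.cycleType + d.cycleType := by
      rw [hgeq]; exact hdisj'.cycleType_mul
    have hctf : f.cycleType = c.cycleType + d.cycleType := by
      rw [hfcd]; exact hdisj_cd.cycleType_mul
    have hcard_ct : Multiset.card (Equiv.swap a b * f).cycleType
        = Multiset.card f.cycleType := by
      rw [hctg, hctf, hc'cyc.cycleType, hcc.cycleType]
      simp
    have hsupg : (Equiv.swap a b * f).support = c'.support ∪ d.support := by
      rw [hgeq]; exact hdisj'.support_mul
    have hsupf : f.support = c.support ∪ d.support := by
      rw [hfcd]; exact hdisj_cd.support_mul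
    have hcards : (Equiv.swap a b * f).support.card = f.support.card + 1 := by
      rw [hsupg, hsupf, Finset.card_union_of_disjoint hdisj'.disjoint_support,
        Finset.card_union_of_disjoint hdisj_cd.disjoint_support, hc'supp,
        Finset.card_insert_of_notMem hanotinc]
      ring
    simp only [pcyc, hcard_ct, hcards]
    omega

lemma numCycles_eq_pcyc {n : ℕ} (σ : Perm (Fin n)) : numCycles σ = pcyc σ := by
  rw [numCycles, pcyc, Equiv.Perm.sum_cycleType, Fintype.card_fin]

lemma decomposeFin_eq {n : ℕ} (p : Fin (n + 1)) (e : Perm (Fin n)) :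
    Equiv.Perm.decomposeFin.symm (p, e)
      = Equiv.swap 0 p * e.extendDomain (finSuccAboveEquiv 0) := by
  ext x
  refine Fin.cases ?_ (fun i => ?_) x
  · rw [Equiv.Perm.decomposeFin_symm_apply_zero]
    have h0 : (e.extendDomain (finSuccAboveEquiv 0)) 0 = 0 :=
      Equiv.Perm.extendDomain_apply_not_subtype _ _ (by simp)
    simp [h0]
  · rw [Equiv.Perm.decomposeFin_symm_apply_succ]
    have hcoe : ∀ j : Fin n, ((finSuccAboveEquiv (0 : Fin (n+1))) j : Fin (n+1)) = j.succ := by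
      intro j
      simp [finSuccAboveEquiv_apply, Fin.zero_succAbove]
    have h1 : (e.extendDomain (finSuccAboveEquiv 0)) i.succ = (e i).succ := by
      have := Equiv.Perm.extendDomain_apply_image e (finSuccAboveEquiv (0 : Fin (n+1))) i
      rwa [hcoe, hcoe] at this
    simp [h1]

lemma numCycles_decomposeFin {n : ℕ} (p : Fin (n + 1)) (e : Perm (Fin n)) :
    numCycles (Equiv.Perm.decomposeFin.symm (p, e))
      = if p = 0 then numCycles e + 1 else numCycles e := by
  have hE : pcyc (e.extendDomain (finSuccAboveEquiv (0 : Fin (n+1)))) = numCycles e + 1 := by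
    rw [pcyc, numCycles_eq_pcyc, pcyc, Equiv.Perm.cycleType_extendDomain,
      Equiv.Perm.card_support_extend_domain, Fintype.card_fin, Fintype.card_fin]
    have := Finset.card_le_univ e.support
    rw [Fintype.card_fin] at this
    omega
  have hE0 : (e.extendDomain (finSuccAboveEquiv (0 : Fin (n+1)))) 0 = 0 :=
    Equiv.Perm.extendDomain_apply_not_subtype _ _ (by simp)
  rw [numCycles_eq_pcyc, decomposeFin_eq]
  split_ifs with hp
  · subst hp
    rw [Equiv.swap_self]
    simpa [Equiv.Perm.refl_mul] using hE
  · have := pcyc_swap_mul (e.extendDomain (finSuccAboveEquiv (0 : Fin (n+1)))) hE0 hp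
    omega

lemma sum_pow_numCycles (n : ℕ) (x : ℝ) :
    ∑ σ : Perm (Fin n), x ^ numCycles σ = ∏ j ∈ Finset.range n, (x + j) := by
  induction n with
  | zero =>
    simp [numCycles]
  | succ n ih =>
    rw [Finset.univ_perm_fin_succ, Finset.sum_map]
    simp only [Equiv.coe_toEmbedding]
    rw [← Finset.univ_product_univ, Finset.sum_product]
    have : ∀ p : Fin (n+1), ∑ e : Perm (Fin n),
        x ^ numCycles (Equiv.Perm.decomposeFin.symm (p, e))
        = if p = 0 then x * ∑ e : Perm (Fin n), x ^ numCycles e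
          else ∑ e : Perm (Fin n), x ^ numCycles e := by
      intro p
      split_ifs with hp
      · subst hp
        rw [Finset.mul_sum]
        refine Finset.sum_congr rfl fun e _ => ?_
        rw [numCycles_decomposeFin, if_pos rfl, pow_succ]
        ring
      · refine Finset.sum_congr rfl fun e _ => ?_
        rw [numCycles_decomposeFin, if_neg hp]
    rw [Finset.sum_congr rfl fun p _ => this p]
    rw [Fin.sum_univ_succ, if_pos rfl]
    simp only [Fin.succ_ne_zero, if_false]
    rw [Finset.sum_const, Finset.card_univ, Fintype.card_fin, Finset.prod_range_succ, ← ih]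
    push_cast
    ring

lemma gamma_interp {x y t : ℝ} (hx : 0 < x) (hy : 0 < y) (ht0 : 0 ≤ t) (ht1 : t ≤ 1) :
    Real.Gamma (t * x + (1 - t) * y)
      ≤ Real.Gamma x ^ t * Real.Gamma y ^ (1 - t) := by
  have hmem : t * x + (1 - t) * y ∈ Set.Ioi (0:ℝ) := by
    rcases eq_or_lt_of_le ht1 with rfl | ht1'
    · simpa using hx
    · have h1 : 0 < (1 - t) * y := mul_pos (by linarith) hy
      have h2 : 0 ≤ t * x := mul_nonneg ht0 hx.le
      simpa using by linarith
  have h := Real.convexOn_log_Gamma.2 (Set.mem_Ioi.mpr hx)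
      (Set.mem_Ioi.mpr hy) ht0 (show (0:ℝ) ≤ 1 - t by linarith)
      (show t + (1 - t) = 1 by ring)
  simp only [Function.comp_apply, smul_eq_mul] at h
  have hΓc : 0 < Real.Gamma (t * x + (1 - t) * y) := Real.Gamma_pos_of_pos hmem
  have hΓx : 0 < Real.Gamma x := Real.Gamma_pos_of_pos hx
  have hΓy : 0 < Real.Gamma y := Real.Gamma_pos_of_pos hy
  calc Real.Gamma (t * x + (1 - t) * y)
      = Real.exp (Real.log (Real.Gamma (t * x + (1 - t) * y))) := (Real.exp_log hΓc).symm
    _ ≤ Real.exp (t * Real.log (Real.Gamma x) + (1 - t) * Real.log (Real.Gamma y)) :=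
        Real.exp_le_exp.mpr h
    _ = Real.Gamma x ^ t * Real.Gamma y ^ (1 - t) := by
        rw [Real.exp_add, Real.rpow_def_of_pos hΓx, Real.rpow_def_of_pos hΓy,
          mul_comm t, mul_comm (1 - t)]

-- (i) lower bound tool : Γ(L+1) ≤ Γ(L+1/4) * (L+1/4)^(3/4)  for L > 0
lemma gamma_ineq_i {L : ℝ} (hL : 0 < L) :
    Real.Gamma (L + 1) ≤ Real.Gamma (L + 1/4) * (L + 1/4) ^ ((3:ℝ)/4) := by
  have h1 : (0:ℝ) < L + 1/4 := by linarith
  have h2 : (0:ℝ) < L + 5/4 := by linarith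
  have h := gamma_interp h1 h2 (t := 1/4) (by norm_num) (by norm_num)
  have harg : (1/4 : ℝ) * (L + 1/4) + (1 - 1/4) * (L + 5/4) = L + 1 := by ring
  rw [harg] at h
  have h54 : Real.Gamma (L + 5/4) = (L + 1/4) * Real.Gamma (L + 1/4) := by
    have : L + 5/4 = (L + 1/4) + 1 := by ring
    rw [this, Real.Gamma_add_one (ne_of_gt h1)]
  rw [h54] at h
  have hΓ : 0 < Real.Gamma (L + 1/4) := Real.Gamma_pos_of_pos h1
  calc Real.Gamma (L + 1)
      ≤ Real.Gamma (L + 1/4) ^ ((1:ℝ)/4) * ((L + 1/4) * Real.Gamma (L + 1/4)) ^ (1 - (1:ℝ)/4)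
        := h
    _ = Real.Gamma (L + 1/4) * (L + 1/4) ^ ((3:ℝ)/4) := by
        rw [Real.mul_rpow (le_of_lt h1) (le_of_lt hΓ)]
        rw [show (1 - (1:ℝ)/4) = (3:ℝ)/4 by norm_num]
        rw [mul_comm ((L + 1/4) ^ ((3:ℝ)/4)), ← mul_assoc, ← Real.rpow_add hΓ]
        norm_num [Real.rpow_one]

-- (ii) upper bound tool : Γ(L+1/4) ≤ Γ(L+1) / L^(3/4) for L > 0
lemma gamma_ineq_ii {L : ℝ} (hL : 0 < L) :
    Real.Gamma (L + 1/4) ≤ Real.Gamma (L + 1) / L ^ ((3:ℝ)/4) := by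
  have h2 : (0:ℝ) < L + 1 := by linarith
  have h := gamma_interp hL h2 (t := 3/4) (by norm_num) (by norm_num)
  have harg : (3/4 : ℝ) * L + (1 - 3/4) * (L + 1) = L + 1/4 := by ring
  rw [harg] at h
  have hΓL : 0 < Real.Gamma L := Real.Gamma_pos_of_pos hL
  have hΓ1 : 0 < Real.Gamma (L + 1) := Real.Gamma_pos_of_pos h2
  have hGL : Real.Gamma L = Real.Gamma (L + 1) / L := by
    rw [Real.Gamma_add_one (ne_of_gt hL)]
    field_simp
  rw [hGL] at h
  calc Real.Gamma (L + 1/4)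
      ≤ (Real.Gamma (L + 1) / L) ^ ((3:ℝ)/4) * Real.Gamma (L + 1) ^ (1 - (3:ℝ)/4) := h
    _ = Real.Gamma (L + 1) / L ^ ((3:ℝ)/4) := by
        rw [Real.div_rpow (le_of_lt hΓ1) (le_of_lt hL)]
        rw [div_mul_eq_mul_div, ← Real.rpow_add hΓ1]
        norm_num

-- (iii) Γ(1/4) ≤ 4
lemma gamma_quarter_le : Real.Gamma (1/4) ≤ 4 := by
  have h := gamma_interp (x := 1) (y := 2) (t := 3/4) one_pos two_pos (by norm_num) (by norm_num)
  have harg : (3/4 : ℝ) * 1 + (1 - 3/4) * 2 = 5/4 := by ring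
  rw [harg, Real.Gamma_one, Real.Gamma_two] at h
  simp only [Real.one_rpow, mul_one] at h
  have h54 : Real.Gamma (5/4 : ℝ) = (1/4) * Real.Gamma (1/4) := by
    have : (5/4 : ℝ) = 1/4 + 1 := by norm_num
    rw [this, Real.Gamma_add_one (by norm_num)]
  rw [h54] at h
  linarith

-- (iv) Γ(1/4) ≥ 4 * (√π/2)^(3/2)
lemma gamma_quarter_ge : 4 * (Real.sqrt Real.pi / 2) ^ ((3:ℝ)/2) ≤ Real.Gamma (1/4) := by
  have h := gamma_interp (x := 5/4) (y := 2) (t := 2/3) (by norm_num) two_pos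
    (by norm_num) (by norm_num)
  have harg : (2/3 : ℝ) * (5/4) + (1 - 2/3) * 2 = 3/2 := by ring
  rw [harg, Real.Gamma_two] at h
  simp only [Real.one_rpow, mul_one] at h
  have h32 : Real.Gamma (3/2 : ℝ) = Real.sqrt Real.pi / 2 := by
    have : (3/2 : ℝ) = 1/2 + 1 := by norm_num
    rw [this, Real.Gamma_add_one (by norm_num), Real.Gamma_one_half_eq]
    ring
  rw [h32] at h
  have hΓ54 : 0 < Real.Gamma (5/4 : ℝ) := Real.Gamma_pos_of_pos (by norm_num)
  -- raise h to the power 3/2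
  have h2 : (Real.sqrt Real.pi / 2) ^ ((3:ℝ)/2)
      ≤ (Real.Gamma (5/4) ^ ((2:ℝ)/3)) ^ ((3:ℝ)/2) := by
    apply Real.rpow_le_rpow (by positivity) h (by norm_num)
  rw [← Real.rpow_mul (le_of_lt hΓ54)] at h2
  norm_num [Real.rpow_one] at h2
  have h54 : Real.Gamma (5/4 : ℝ) = (1/4) * Real.Gamma (1/4) := by
    have : (5/4 : ℝ) = 1/4 + 1 := by norm_num
    rw [this, Real.Gamma_add_one (by norm_num)]
  rw [h54] at h2
  linarith

lemma numeric_key : 5 * (2:ℝ) ^ ((3:ℝ)/4) < 12 * (Real.sqrt Real.pi / 2) ^ ((3:ℝ)/2) := by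
  have hpi : (3.141592 : ℝ) < Real.pi := Real.pi_gt_d6
  set a := (2:ℝ) ^ ((3:ℝ)/4) with ha
  set b := (Real.sqrt Real.pi / 2) ^ ((3:ℝ)/2) with hb
  have hapos : 0 < a := Real.rpow_pos_of_pos two_pos _
  have hbpos : 0 < b := Real.rpow_pos_of_pos (by positivity) _
  have ha4 : a ^ (4:ℕ) = 8 := by
    rw [ha, ← Real.rpow_natCast ((2:ℝ) ^ ((3:ℝ)/4)) 4, ← Real.rpow_mul (by norm_num)]
    norm_num
  have hb4 : b ^ (4:ℕ) = Real.pi ^ (3:ℕ) / 64 := by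
    rw [hb, ← Real.rpow_natCast ((Real.sqrt Real.pi / 2) ^ ((3:ℝ)/2)) 4,
      ← Real.rpow_mul (by positivity)]
    norm_num
    rw [div_pow,
      show (6:ℕ) = 2 * 3 by norm_num, pow_mul, Real.sq_sqrt Real.pi_pos.le]
    norm_num
  have hkey4 : (5 * a) ^ (4:ℕ) < (12 * b) ^ (4:ℕ) := by
    rw [mul_pow, mul_pow, ha4, hb4]
    have h3 : (3.141592:ℝ)^(3:ℕ) < Real.pi^(3:ℕ) :=
      pow_lt_pow_left₀ hpi (by norm_num) (by norm_num)
    nlinarith [h3]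
  exact lt_of_pow_lt_pow_left₀ 4 (by positivity) hkey4

lemma stirlingC_eq_card (ℓ k : ℕ) :
    stirlingC ℓ k = (Finset.univ.filter (fun σ : Perm (Fin ℓ) => numCycles σ = k)).card := by
  rw [stirlingC, Nat.card_eq_fintype_card, Fintype.card_subtype]

lemma numCycles_mem {ℓ : ℕ} (hℓ : 0 < ℓ) (σ : Perm (Fin ℓ)) :
    numCycles σ ∈ Finset.Icc 1 ℓ := by
  have hsum : σ.cycleType.sum = σ.support.card := Equiv.Perm.sum_cycleType σ
  have hsle : σ.support.card ≤ ℓ := by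
    simpa using Finset.card_le_univ σ.support
  have hcardle : Multiset.card σ.cycleType ≤ σ.cycleType.sum := by
    have := Multiset.card_nsmul_le_sum (s := σ.cycleType) (a := 1)
      (fun x hx => Equiv.Perm.one_lt_of_mem_cycleType hx |>.le)
    simpa using this
  rw [Finset.mem_Icc, numCycles]
  constructor
  · by_cases h : σ.cycleType = 0
    · simp [h]; omega
    · have : 1 ≤ Multiset.card σ.cycleType := by
        rw [Nat.one_le_iff_ne_zero]
        simpa [Multiset.card_eq_zero] using h
      omega
  · omega

lemma sum_stirling (ℓ : ℕ) (hℓ : 0 < ℓ) (x : ℝ) :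
    ∑ k ∈ Finset.Icc 1 ℓ, (stirlingC ℓ k : ℝ) * x ^ k
      = ∑ σ : Perm (Fin ℓ), x ^ numCycles σ := by
  rw [← Finset.sum_fiberwise_of_maps_to (fun σ _ => numCycles_mem hℓ σ)
    (fun σ => x ^ numCycles σ)]
  refine Finset.sum_congr rfl fun k hk => ?_
  rw [stirlingC_eq_card,
    Finset.sum_congr rfl (fun σ hσ => by rw [(Finset.mem_filter.mp hσ).2]),
    Finset.sum_const, nsmul_eq_mul]

lemma gamma_prod (n : ℕ) :
    Real.Gamma ((n:ℝ) + 1/4) = Real.Gamma (1/4) * ∏ j ∈ Finset.range n, ((1:ℝ)/4 + j) := by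
  induction n with
  | zero => simp
  | succ n ih =>
    have h1 : ((n+1:ℕ):ℝ) + 1/4 = ((n:ℝ) + 1/4) + 1 := by push_cast; ring
    have h2 : ((n:ℝ) + 1/4) ≠ 0 := by positivity
    rw [h1, Real.Gamma_add_one h2, ih, Finset.prod_range_succ]
    ring

theorem stmt_13 (ℓ : ℕ) (hℓ : 0 < ℓ) :
    ∑ k ∈ Finset.Icc 1 ℓ, (stirlingC ℓ k : ℝ) / (4 ^ k * Nat.factorial ℓ)
        = Real.Gamma ((ℓ : ℝ) + 1 / 4) /
            (Real.Gamma ((ℓ : ℝ) + 1) * Real.Gamma (1 / 4)) ∧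
    1 / (4 * ((ℓ : ℝ) + 1) ^ ((3 : ℝ) / 4))
        < Real.Gamma ((ℓ : ℝ) + 1 / 4) /
            (Real.Gamma ((ℓ : ℝ) + 1) * Real.Gamma (1 / 4)) ∧
    Real.Gamma ((ℓ : ℝ) + 1 / 4) /
            (Real.Gamma ((ℓ : ℝ) + 1) * Real.Gamma (1 / 4))
        < 3 / (5 * ((ℓ : ℝ) + 1) ^ ((3 : ℝ) / 4)) := by
  have hL0 : (0:ℝ) < (ℓ:ℝ) := by exact_mod_cast hℓ
  have hL1 : (1:ℝ) ≤ (ℓ:ℝ) := by exact_mod_cast hℓ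
  have hG1 : 0 < Real.Gamma ((ℓ:ℝ) + 1/4) := Real.Gamma_pos_of_pos (by linarith)
  have hG2 : 0 < Real.Gamma ((ℓ:ℝ) + 1) := Real.Gamma_pos_of_pos (by linarith)
  have hG4 : 0 < Real.Gamma (1/4 : ℝ) := Real.Gamma_pos_of_pos (by norm_num)
  have hfact : Real.Gamma ((ℓ:ℝ) + 1) = (Nat.factorial ℓ : ℝ) :=
    Real.Gamma_nat_eq_factorial ℓ
  have hfpos : (0:ℝ) < (Nat.factorial ℓ : ℝ) := by
    exact_mod_cast Nat.factorial_pos ℓ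
  refine ⟨?_, ?_, ?_⟩
  · -- identity
    have hpt : ∀ k ∈ Finset.Icc 1 ℓ, (stirlingC ℓ k : ℝ) / (4 ^ k * Nat.factorial ℓ)
        = ((stirlingC ℓ k : ℝ) * (1/4:ℝ) ^ k) / (Nat.factorial ℓ : ℝ) := by
      intro k _
      rw [div_pow, one_pow]
      field_simp
    rw [Finset.sum_congr rfl hpt, ← Finset.sum_div, sum_stirling ℓ hℓ (1/4),
      sum_pow_numCycles, hfact]
    have := gamma_prod ℓ
    rw [this]
    field_simp
  · -- lower bound
    have hi := gamma_ineq_i hL0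
    have hQlt : ((ℓ:ℝ) + 1/4) ^ ((3:ℝ)/4) < ((ℓ:ℝ) + 1) ^ ((3:ℝ)/4) :=
      Real.rpow_lt_rpow (by positivity) (by linarith) (by norm_num)
    have hG4le := gamma_quarter_le
    have hQpos : (0:ℝ) < ((ℓ:ℝ) + 1/4) ^ ((3:ℝ)/4) := Real.rpow_pos_of_pos (by linarith) _
    have hPpos : (0:ℝ) < ((ℓ:ℝ) + 1) ^ ((3:ℝ)/4) := Real.rpow_pos_of_pos (by linarith) _
    rw [div_lt_div_iff₀ (by positivity) (by positivity)]
    nlinarith [mul_le_mul hi hG4le hG4.le (by positivity :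
        (0:ℝ) ≤ Real.Gamma ((ℓ:ℝ) + 1/4) * ((ℓ:ℝ) + 1/4) ^ ((3:ℝ)/4)),
      mul_lt_mul_of_pos_left hQlt (by positivity : (0:ℝ) < 4 * Real.Gamma ((ℓ:ℝ) + 1/4))]
  · -- upper bound
    set t := ((ℓ:ℝ)) ^ ((3:ℝ)/4) with ht
    set s := (2:ℝ) ^ ((3:ℝ)/4) with hs
    set w := (Real.sqrt Real.pi / 2) ^ ((3:ℝ)/2) with hw
    have htpos : 0 < t := Real.rpow_pos_of_pos hL0 _
    have hspos : 0 < s := Real.rpow_pos_of_pos two_pos _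
    have hwpos : 0 < w := Real.rpow_pos_of_pos (by positivity) _
    have hPpos : (0:ℝ) < ((ℓ:ℝ) + 1) ^ ((3:ℝ)/4) := Real.rpow_pos_of_pos (by linarith) _
    have hii : Real.Gamma ((ℓ:ℝ) + 1/4) * t ≤ Real.Gamma ((ℓ:ℝ) + 1) :=
      (le_div_iff₀ htpos).mp (gamma_ineq_ii hL0)
    have hPle : ((ℓ:ℝ) + 1) ^ ((3:ℝ)/4) ≤ s * t := by
      have h2L : ((ℓ:ℝ) + 1) ≤ 2 * (ℓ:ℝ) := by linarith
      calc ((ℓ:ℝ) + 1) ^ ((3:ℝ)/4) ≤ (2 * (ℓ:ℝ)) ^ ((3:ℝ)/4) :=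
            Real.rpow_le_rpow (by linarith) h2L (by norm_num)
        _ = s * t := Real.mul_rpow (by norm_num) hL0.le
    have hG4ge := gamma_quarter_ge
    have hnum := numeric_key
    rw [div_lt_div_iff₀ (by positivity) (by positivity)]
    have h1 : Real.Gamma ((ℓ:ℝ) + 1/4) * (((ℓ:ℝ) + 1) ^ ((3:ℝ)/4))
        ≤ Real.Gamma ((ℓ:ℝ) + 1/4) * (s * t) :=
      mul_le_mul_of_nonneg_left hPle hG1.le
    have h3 : 5 * s * (Real.Gamma ((ℓ:ℝ) + 1/4) * t) ≤ 5 * s * Real.Gamma ((ℓ:ℝ) + 1) :=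
      mul_le_mul_of_nonneg_left hii (by positivity)
    have h4 : 5 * s * Real.Gamma ((ℓ:ℝ) + 1) < 12 * w * Real.Gamma ((ℓ:ℝ) + 1) := by
      nlinarith [hnum, hG2]
    have h5 : 12 * w * Real.Gamma ((ℓ:ℝ) + 1)
        ≤ 3 * (Real.Gamma ((ℓ:ℝ) + 1) * Real.Gamma (1/4)) := by
      nlinarith [hG4ge, hG2]
    nlinarith [h1, h3, h4, h5, hG1, htpos, hspos]
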